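/- The function f_K(x;r) = sqrt(1-r^2) / (π (1-x^2) sqrt(r^2-x^2)) on the interval (-r,r) is a probability density: for every r with 0 < r < 1, the integral of f_K(x;r) over x ∈ (-r,r) equals 1. -/

import Mathlib

open Real MeasureTheory

/-- The Konno density function `f_K(x;r)`. -/
noncomputable def konnoDensity (r x : ℝ) : ℝ :=
  if x ∈ Set.Ioo (-r) r then Real.sqrt (1 - r ^ 2) / (π * (1 - x ^ 2) * Real.sqrt (r ^ 2 - x ^ 2))
  else 0

private lemma konno_hasDerivAt (r : ℝ) (hr0 : 0 < r) (hr1 : r < 1) (x : ℝ)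
    (hx : x ∈ Set.Ioo (-r) r) :
    HasDerivAt (fun y : ℝ => (1/π) * Real.arcsin (y * Real.sqrt (1 - r^2) / (r * Real.sqrt (1 - y^2))))
      (Real.sqrt (1 - r ^ 2) / (π * (1 - x ^ 2) * Real.sqrt (r ^ 2 - x ^ 2))) x := by
  obtain ⟨hx1, hx2⟩ := hx
  have hxr : x^2 < r^2 := by nlinarith
  have hx1' : x^2 < 1 := by nlinarith
  have h1x : (0:ℝ) < 1 - x^2 := by linarith
  have h1r : (0:ℝ) < 1 - r^2 := by nlinarith
  have hs1 : (0:ℝ) < Real.sqrt (1 - x^2) := Real.sqrt_pos.mpr h1x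
  have hs2 : (0:ℝ) < Real.sqrt (r^2 - x^2) := Real.sqrt_pos.mpr (by linarith)
  have hc : (0:ℝ) < Real.sqrt (1 - r^2) := Real.sqrt_pos.mpr h1r
  set c := Real.sqrt (1 - r^2) with hcdef
  set s1 := Real.sqrt (1 - x^2) with hs1def
  set s2 := Real.sqrt (r^2 - x^2) with hs2def
  have hs1sq : s1^2 = 1 - x^2 := Real.sq_sqrt h1x.le
  have hs2sq : s2^2 = r^2 - x^2 := Real.sq_sqrt (by linarith)
  have hcsq : c^2 = 1 - r^2 := Real.sq_sqrt h1r.le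
  have hinner : HasDerivAt (fun y : ℝ => y * c / (r * Real.sqrt (1 - y^2)))
      ((c * (r * s1) - x * c * (r * (-(2*x) / (2*s1)))) / (r * s1)^2) x := by
    have h1 : HasDerivAt (fun y : ℝ => 1 - y^2) (-(2*x)) x := by
      simpa using ((hasDerivAt_pow 2 x).const_sub 1)
    have h2 : HasDerivAt (fun y : ℝ => Real.sqrt (1 - y^2)) (-(2*x) / (2*s1)) x := by
      have := (Real.hasDerivAt_sqrt (ne_of_gt h1x)).comp x h1
      simpa [hs1def, div_eq_mul_inv, mul_comm, Function.comp_def] using this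
    have := ((hasDerivAt_id x).mul_const c).div ((h2.const_mul r)) (show r * Real.sqrt (1-x^2) ≠ 0 by positivity)
    refine this.congr_deriv ?_
    simp [hs1def]
  have harg : (x * c / (r * s1))^2 < 1 := by
    rw [div_pow, div_lt_one (by positivity)]
    rw [mul_pow, mul_pow, hs1sq, hcsq]
    nlinarith
  have hargabs : -1 < x * c / (r * s1) ∧ x * c / (r * s1) < 1 :=
    abs_lt.mp (by rwa [sq_lt_one_iff_abs_lt_one] at harg)
  have harc : HasDerivAt Real.arcsin (1 / Real.sqrt (1 - (x * c / (r * s1))^2)) (x * c / (r * s1)) :=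
    Real.hasDerivAt_arcsin (ne_of_gt hargabs.1) (ne_of_lt hargabs.2)
  have hcomp := (harc.comp x hinner).const_mul (1/π)
  refine hcomp.congr_deriv ?_
  symm
  have hsimp : Real.sqrt (1 - (x * c / (r * s1))^2) = s2 / (r * s1) := by
    have : 1 - (x * c / (r * s1))^2 = (s2 / (r * s1))^2 := by
      field_simp
      nlinarith [hs1sq, hs2sq, hcsq]
    rw [this, Real.sqrt_sq (by positivity)]
  rw [hsimp]
  have hpi : (0:ℝ) < π := Real.pi_pos
  field_simp
  linear_combination x^2 * hs1sq

theorem konnoDensity_integral_eq_one (r : ℝ) (hr0 : 0 < r) (hr1 : r < 1) :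
    ∫ x in Set.Ioo (-r) r, konnoDensity r x = 1 := by
  have h1r : (0:ℝ) < 1 - r^2 := by nlinarith
  have hc : (0:ℝ) < Real.sqrt (1 - r^2) := Real.sqrt_pos.mpr h1r
  set g : ℝ → ℝ := fun x => Real.sqrt (1 - r ^ 2) / (π * (1 - x ^ 2) * Real.sqrt (r ^ 2 - x ^ 2))
    with hgdef
  set F : ℝ → ℝ := fun y => (1/π) * Real.arcsin (y * Real.sqrt (1 - r^2) / (r * Real.sqrt (1 - y^2)))
    with hFdef
  have hab : -r ≤ r := by linarith
  have hcont : ContinuousOn F (Set.Icc (-r) r) := by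
    apply ContinuousOn.mul continuousOn_const
    apply Real.continuous_arcsin.comp_continuousOn
    apply ContinuousOn.div
    · exact (continuousOn_id.mul continuousOn_const)
    · exact continuousOn_const.mul ((continuous_const.sub (continuous_pow 2)).continuousOn.sqrt)
    · intro x hx
      have hx1 : x^2 ≤ r^2 := by
        rcases hx with ⟨h1, h2⟩; nlinarith
      have : (0:ℝ) < 1 - x^2 := by nlinarith
      positivity
  have hderiv : ∀ x ∈ Set.Ioo (-r) r, HasDerivWithinAt F (g x) (Set.Ioi x) x :=
    fun x hx => (konno_hasDerivAt r hr0 hr1 x hx).hasDerivWithinAt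
  have hpos : ∀ x ∈ Set.Ioo (-r) r, 0 ≤ g x := by
    intro x hx
    rcases hx with ⟨h1, h2⟩
    have hx1 : x^2 < r^2 := by nlinarith
    have h1x : (0:ℝ) < 1 - x^2 := by nlinarith
    have hs2 : (0:ℝ) < Real.sqrt (r^2 - x^2) := Real.sqrt_pos.mpr (by linarith)
    have hpi := Real.pi_pos
    positivity
  have hint : IntegrableOn g (Set.Ioc (-r) r) volume :=
    intervalIntegral.integrableOn_deriv_of_nonneg hcont
      (fun x hx => konno_hasDerivAt r hr0 hr1 x hx) hpos
  have hii : IntervalIntegrable g volume (-r) r :=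
    (intervalIntegrable_iff_integrableOn_Ioc_of_le hab).mpr hint
  have hftc : ∫ x in (-r)..r, g x = F r - F (-r) :=
    intervalIntegral.integral_eq_sub_of_hasDeriv_right_of_le hab hcont hderiv hii
  have hcongr : ∫ x in Set.Ioo (-r) r, konnoDensity r x = ∫ x in Set.Ioo (-r) r, g x := by
    apply setIntegral_congr_fun measurableSet_Ioo
    intro x hx
    simp only [konnoDensity, if_pos hx, hgdef]
  have hioc : ∫ x in Set.Ioo (-r) r, g x = ∫ x in Set.Ioc (-r) r, g x :=
    (MeasureTheory.integral_Ioc_eq_integral_Ioo).symm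
  have hFr : F r = 1/2 := by
    have : r * Real.sqrt (1 - r^2) / (r * Real.sqrt (1 - r^2)) = 1 :=
      div_self (by positivity)
    rw [hFdef]
    simp only [this, Real.arcsin_one]
    field_simp
  have hFnr : F (-r) = -(1/2) := by
    have h : -r * Real.sqrt (1 - r^2) / (r * Real.sqrt (1 - (-r)^2)) = -1 := by
      rw [neg_sq]
      rw [neg_mul, neg_div]
      rw [div_self (by positivity)]
    rw [hFdef]
    simp only [h, Real.arcsin_neg_one]
    field_simp
  rw [hcongr, hioc, ← intervalIntegral.integral_of_le hab, hftc, hFr, hFnr]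
  norm_num
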